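/- For every η > 0 there exists d > 0 with the following property. Let g be a network on N agents with d(g) ≤ d, let x* ∈ [0,1], and let A₁, …, A_N be independent random variables taking values in [0,1] with E[Aⱼ] = x* for every j. Define the random neighborhood averages βᵢ := (1/gᵢ)·Σ_j (g i j)·Aⱼ. Then Prob( Σᵢ gᵢ·|βᵢ − x*| > η·Σᵢ gᵢ ) < η. -/

import Mathlib

open MeasureTheory Finset

/-- A weighted network on `N` agents. -/
structure Network (N : ℕ) where
  g : Fin N → Fin N → ℝ
  symm : ∀ i j, g i j = g j i
  nonneg : ∀ i j, 0 ≤ g i j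
  diag : ∀ i, g i i = 0
  degPos : ∀ i, 0 < ∑ j, g i j

namespace Network

variable {N : ℕ}

/-- Degree of agent `i`. -/
noncomputable def deg (G : Network N) (i : Fin N) : ℝ := ∑ j, G.g i j

/-- Weighted average action `Av`. -/
noncomputable def Av (G : Network N) (a : Fin N → ℝ) : ℝ :=
  (∑ i, G.deg i * a i) / (∑ i, G.deg i)

/-- Neighborhood average `βᵢ(a)`. -/
noncomputable def nbr (G : Network N) (a : Fin N → ℝ) (i : Fin N) : ℝ :=
  (∑ j, G.g i j * a j) / G.deg i

/-- Weighted distance between profiles. -/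
noncomputable def wdist (G : Network N) (a b : Fin N → ℝ) : ℝ :=
  Real.sqrt ((∑ i, (G.deg i) ^ 2 * (a i - b i) ^ 2) / (∑ i, (G.deg i) ^ 2))

/-- Fineness `d(g) = max_{i,j} g i j / gᵢ`. -/
noncomputable def fineness (G : Network N) : ℝ := ⨆ i, ⨆ j, G.g i j / G.deg i

/-- Degree inequality `w(g) = max gᵢ / min gᵢ`. -/
noncomputable def imbalance (G : Network N) : ℝ := (⨆ i, G.deg i) / (⨅ i, G.deg i)

/-- Balanced network: all degrees equal. -/
def Balanced (G : Network N) : Prop := ∀ i j, G.deg i = G.deg j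

end Network

open MeasureTheory ProbabilityTheory

lemma my_integrable_of_bdd {Ω : Type} [MeasurableSpace Ω] (P : Measure Ω) [IsFiniteMeasure P]
    {f : Ω → ℝ} (hf : Measurable f) {C : ℝ} (h : ∀ ω, |f ω| ≤ C) : Integrable f P :=
  ⟨hf.aestronglyMeasurable, HasFiniteIntegral.of_bounded (C := C)
    (ae_of_all _ (fun ω => by simpa [Real.norm_eq_abs] using h ω))⟩

/-- **Lemma: neighborhood averages concentrate.** If the actions `Aⱼ` are
independent `[0,1]`-valued random variables with mean `x*`, then on any sufficiently fine
network the degree-weighted average deviation of the neighborhood averages from `x*`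
exceeds `η` with probability less than `η`. -/
theorem neighborhood_average_concentration :
    ∀ η > (0 : ℝ), ∃ d > (0 : ℝ), ∀ (N : ℕ) (G : Network N), G.fineness ≤ d →
      ∀ xs : ℝ, xs ∈ Set.Icc (0 : ℝ) 1 →
      ∀ (Ω : Type) (mΩ : MeasurableSpace Ω) (P : Measure Ω),
        IsProbabilityMeasure P →
        ∀ A : Fin N → Ω → ℝ,
          (∀ j, Measurable (A j)) →
          iIndepFun (m := fun _ : Fin N => Real.measurableSpace) A P →
          (∀ j ω, A j ω ∈ Set.Icc (0 : ℝ) 1) →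
          (∀ j, ∫ ω, A j ω ∂P = xs) →
          P {ω | η * ∑ i, G.deg i <
              ∑ i, G.deg i * |(∑ j, G.g i j * A j ω) / G.deg i - xs|} <
            ENNReal.ofReal η := by
  classical
  intro η hη
  refine ⟨η ^ 3 / 2, by positivity, ?_⟩
  intro N G hfine xs hxs Ω mΩ P hP A hAmeas hAindep hAmem hAmean
  rcases Nat.eq_zero_or_pos N with hN | hN
  · subst hN
    have he : {ω : Ω | η * ∑ i : Fin 0, G.deg i <
        ∑ i : Fin 0, G.deg i * |(∑ j, G.g i j * A j ω) / G.deg i - xs|} = ∅ := by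
      simp
    rw [he]
    simpa using ENNReal.ofReal_pos.mpr hη
  haveI : Nonempty (Fin N) := ⟨⟨0, hN⟩⟩
  set d : ℝ := η ^ 3 / 2 with hd
  have hdpos : 0 < d := by positivity
  have hdeg : ∀ i, 0 < G.deg i := G.degPos
  -- coefficients
  set c : Fin N → Fin N → ℝ := fun i j => G.g i j / G.deg i with hc
  have hc_nonneg : ∀ i j, 0 ≤ c i j := fun i j => div_nonneg (G.nonneg i j) (hdeg i).le
  have hc_sum : ∀ i, ∑ j, c i j = 1 := by
    intro i
    rw [← Finset.sum_div]
    exact div_self (hdeg i).ne'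
  have hc_le : ∀ i j, c i j ≤ d := by
    intro i j
    refine le_trans ?_ hfine
    have h1 : c i j ≤ ⨆ k, G.g i k / G.deg i :=
      le_ciSup (Set.Finite.bddAbove (Set.finite_range _)) j
    exact h1.trans (le_ciSup (f := fun i => ⨆ j, G.g i j / G.deg i)
      (Set.Finite.bddAbove (Set.finite_range _)) i)
  -- centered variables
  set Y : Fin N → Ω → ℝ := fun j ω => A j ω - xs with hY
  have hYmeas : ∀ j, Measurable (Y j) := fun j => (hAmeas j).sub measurable_const
  have hYbdd : ∀ j ω, |Y j ω| ≤ 1 := by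
    intro j ω
    have h1 := hAmem j ω
    have h2 := hxs
    simp only [Set.mem_Icc] at h1 h2
    rw [abs_le]; constructor <;> simp only [hY] <;> linarith [h1.1, h1.2, h2.1, h2.2]
  have hYint : ∀ j, Integrable (Y j) P := fun j => my_integrable_of_bdd P (hYmeas j) (hYbdd j)
  have hYmul_int : ∀ j k, Integrable (fun ω => Y j ω * Y k ω) P := by
    intro j k
    refine my_integrable_of_bdd P ((hYmeas j).mul (hYmeas k)) (C := 1) (fun ω => ?_)
    rw [abs_mul]
    calc |Y j ω| * |Y k ω| ≤ 1 * 1 :=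
      mul_le_mul (hYbdd j ω) (hYbdd k ω) (abs_nonneg _) zero_le_one
    _ = 1 := by ring
  have hYmean : ∀ j, ∫ ω, Y j ω ∂P = 0 := by
    intro j
    have hAint : Integrable (A j) P := by
      refine my_integrable_of_bdd P (hAmeas j) (C := 1) (fun ω => ?_)
      have := hAmem j ω; simp only [Set.mem_Icc] at this
      rw [abs_le]; constructor <;> linarith [this.1, this.2]
    simp only [hY]
    rw [integral_sub hAint (integrable_const xs), hAmean j, integral_const]
    simp
  have hcross : ∀ j k, j ≠ k → ∫ ω, Y j ω * Y k ω ∂P = 0 := by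
    intro j k hjk
    have hind : IndepFun (Y j) (Y k) P := by
      have := hAindep.indepFun hjk
      exact this.comp (measurable_id.sub_const xs) (measurable_id.sub_const xs)
    have := hind.integral_mul_eq_mul_integral (hYint j).aestronglyMeasurable (hYint k).aestronglyMeasurable
    rw [show (Y j * Y k) = fun ω => Y j ω * Y k ω from rfl] at this
    rw [this, hYmean j, hYmean k, mul_zero]
  have hsq_le : ∀ j, ∫ ω, Y j ω * Y j ω ∂P ≤ 1 := by
    intro j
    calc ∫ ω, Y j ω * Y j ω ∂P ≤ ∫ _ω, (1 : ℝ) ∂P := by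
          refine integral_mono (hYmul_int j j) (integrable_const 1) (fun ω => ?_)
          have := hYbdd j ω
          nlinarith [abs_nonneg (Y j ω), abs_mul_abs_self (Y j ω)]
      _ = 1 := by simp
  have hsq_nonneg : ∀ j, 0 ≤ ∫ ω, Y j ω * Y j ω ∂P :=
    fun j => integral_nonneg (fun ω => mul_self_nonneg _)
  -- the centered neighborhood average
  set F : Fin N → Ω → ℝ := fun i ω => ∑ j, c i j * Y j ω with hF
  have hFeq : ∀ i ω, (∑ j, G.g i j * A j ω) / G.deg i - xs = F i ω := by
    intro i ω
    have : F i ω = (∑ j, G.g i j * A j ω) / G.deg i - (∑ j, c i j) * xs := by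
      rw [Finset.sum_div, Finset.sum_mul, ← Finset.sum_sub_distrib]
      refine Finset.sum_congr rfl fun j _ => ?_
      simp only [hF, hY, hc]
      ring
    rw [this, hc_sum i, one_mul]
  -- second moment bound
  have hFvar : ∀ i, ∫ ω, (F i ω) ^ 2 ∂P ≤ d := by
    intro i
    have hexp : ∀ ω, (F i ω) ^ 2 = ∑ j, ∑ k, (c i j * c i k) * (Y j ω * Y k ω) := by
      intro ω
      simp only [hF, sq, Finset.sum_mul_sum]
      exact Finset.sum_congr rfl fun j _ => Finset.sum_congr rfl fun k _ => by ring
    have hint : ∫ ω, (F i ω) ^ 2 ∂P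
        = ∑ j, ∑ k, (c i j * c i k) * ∫ ω, Y j ω * Y k ω ∂P := by
      simp only [hexp]
      rw [integral_finset_sum _ (fun j _ =>
        integrable_finset_sum _ (fun k _ => (hYmul_int j k).const_mul _))]
      exact Finset.sum_congr rfl fun j _ => by
        rw [integral_finset_sum _ (fun k _ => (hYmul_int j k).const_mul _)]
        exact Finset.sum_congr rfl fun k _ => integral_const_mul _ _
    rw [hint]
    have hdiag : ∀ j : Fin N, (∑ k, (c i j * c i k) * ∫ ω, Y j ω * Y k ω ∂P)
        = (c i j * c i j) * ∫ ω, Y j ω * Y j ω ∂P := by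
      intro j
      refine Finset.sum_eq_single j (fun k _ hk => ?_) (by simp)
      simp [hcross j k (Ne.symm hk)]
    calc (∑ j, ∑ k, (c i j * c i k) * ∫ ω, Y j ω * Y k ω ∂P)
        = ∑ j, (c i j * c i j) * ∫ ω, Y j ω * Y j ω ∂P :=
          Finset.sum_congr rfl fun j _ => hdiag j
      _ ≤ ∑ j, d * c i j := by
          refine Finset.sum_le_sum (fun j _ => ?_)
          have h1 := hc_nonneg i j
          have h2 := hc_le i j
          have h3 := hsq_le j
          have h4 := hsq_nonneg j
          nlinarith
      _ = d := by rw [← Finset.mul_sum, hc_sum i, mul_one]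
  -- total
  set T : Ω → ℝ := fun ω => ∑ i, G.deg i * (F i ω) ^ 2 with hT
  have hTmeas : Measurable T := by
    refine Finset.measurable_sum _ (fun i _ => Measurable.const_mul ?_ _)
    exact ((Finset.measurable_sum _ (fun j _ => (hYmeas j).const_mul _)).pow_const 2)
  have hFbdd : ∀ i ω, |F i ω| ≤ 1 := by
    intro i ω
    calc |F i ω| ≤ ∑ j, |c i j * Y j ω| := Finset.abs_sum_le_sum_abs _ _
      _ ≤ ∑ j, c i j := by
          refine Finset.sum_le_sum (fun j _ => ?_)
          rw [abs_mul, abs_of_nonneg (hc_nonneg i j)]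
          calc c i j * |Y j ω| ≤ c i j * 1 :=
            mul_le_mul_of_nonneg_left (hYbdd j ω) (hc_nonneg i j)
          _ = c i j := mul_one _
      _ = 1 := hc_sum i
  have hFint2 : ∀ i, Integrable (fun ω => (F i ω) ^ 2) P := by
    intro i
    refine my_integrable_of_bdd P
      ((Finset.measurable_sum _ (fun j _ => (hYmeas j).const_mul _)).pow_const 2)
      (C := 1) (fun ω => ?_)
    rw [abs_of_nonneg (sq_nonneg _)]
    nlinarith [sq_abs (F i ω), abs_nonneg (F i ω), hFbdd i ω]
  have hTint : Integrable T P := by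
    refine my_integrable_of_bdd P hTmeas (C := ∑ i, G.deg i) (fun ω => ?_)
    rw [abs_of_nonneg (Finset.sum_nonneg fun i _ =>
      mul_nonneg (hdeg i).le (sq_nonneg _))]
    refine Finset.sum_le_sum (fun i _ => ?_)
    have h1 : F i ω ^ 2 ≤ 1 := by nlinarith [sq_abs (F i ω), abs_nonneg (F i ω), hFbdd i ω]
    nlinarith [hdeg i]
  have hTmean : ∫ ω, T ω ∂P ≤ d * ∑ i, G.deg i := by
    have : ∫ ω, T ω ∂P = ∑ i, G.deg i * ∫ ω, (F i ω) ^ 2 ∂P := by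
      simp only [hT]
      rw [integral_finset_sum _ (fun i _ => (hFint2 i).const_mul _)]
      exact Finset.sum_congr rfl fun i _ => integral_const_mul _ _
    rw [this, Finset.mul_sum]
    exact Finset.sum_le_sum fun i _ => by
      rw [mul_comm d _]
      exact mul_le_mul_of_nonneg_left (hFvar i) (hdeg i).le
  -- positivity of total degree
  set Dg : ℝ := ∑ i, G.deg i with hDg
  have hDgpos : 0 < Dg := Finset.sum_pos (fun i _ => hdeg i) Finset.univ_nonempty
  -- event inclusion via Cauchy-Schwarz
  have hsubset : {ω | η * Dg < ∑ i, G.deg i * |(∑ j, G.g i j * A j ω) / G.deg i - xs|}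
      ⊆ {ω | η ^ 2 * Dg ≤ T ω} := by
    intro ω hω
    simp only [Set.mem_setOf_eq] at hω ⊢
    have hSF : (∑ i, G.deg i * |(∑ j, G.g i j * A j ω) / G.deg i - xs|)
        = ∑ i, G.deg i * |F i ω| := by
      exact Finset.sum_congr rfl fun i _ => by rw [hFeq]
    rw [hSF] at hω
    set S : ℝ := ∑ i, G.deg i * |F i ω| with hS
    have hCS : S ^ 2 ≤ Dg * T ω := by
      have h := Finset.sum_mul_sq_le_sq_mul_sq Finset.univ
        (fun i => Real.sqrt (G.deg i)) (fun i => Real.sqrt (G.deg i) * |F i ω|)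
      have h1 : (∑ i, Real.sqrt (G.deg i) * (Real.sqrt (G.deg i) * |F i ω|)) = S := by
        refine Finset.sum_congr rfl fun i _ => ?_
        rw [← mul_assoc, Real.mul_self_sqrt (hdeg i).le]
      have h2 : (∑ i, Real.sqrt (G.deg i) ^ 2) = Dg := by
        refine Finset.sum_congr rfl fun i _ => Real.sq_sqrt (hdeg i).le
      have h3 : (∑ i, (Real.sqrt (G.deg i) * |F i ω|) ^ 2) = T ω := by
        refine Finset.sum_congr rfl fun i _ => ?_
        rw [mul_pow, Real.sq_sqrt (hdeg i).le, sq_abs]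
      rw [h1, h2, h3] at h
      exact h
    have hS0 : 0 < S := lt_of_le_of_lt (by positivity) hω
    nlinarith [sq_nonneg S, mul_pos hη hDgpos]
  -- Markov
  have hTnonneg : 0 ≤ᵐ[P] T :=
    ae_of_all _ fun ω => Finset.sum_nonneg fun i _ => mul_nonneg (hdeg i).le (sq_nonneg _)
  have hmarkov := mul_meas_ge_le_integral_of_nonneg hTnonneg hTint (η ^ 2 * Dg)
  have hεpos : 0 < η ^ 2 * Dg := by positivity
  have hmeasfin : P {x | η ^ 2 * Dg ≤ T x} ≠ ⊤ := measure_ne_top _ _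
  have hkey : (P {x | η ^ 2 * Dg ≤ T x}).toReal ≤ d / η ^ 2 := by
    have h1 : (η ^ 2 * Dg) * (P {x | η ^ 2 * Dg ≤ T x}).toReal ≤ d * Dg :=
      hmarkov.trans hTmean
    have h2 : 0 ≤ (P {x | η ^ 2 * Dg ≤ T x}).toReal := ENNReal.toReal_nonneg
    rw [le_div_iff₀ (by positivity : (0:ℝ) < η ^ 2)]
    nlinarith [hDgpos]
  have hlt : (P {x | η ^ 2 * Dg ≤ T x}).toReal < η := by
    have : d / η ^ 2 = η / 2 := by
      rw [hd]; field_simp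
    rw [this] at hkey
    linarith
  calc P {ω | η * Dg < ∑ i, G.deg i * |(∑ j, G.g i j * A j ω) / G.deg i - xs|}
      ≤ P {x | η ^ 2 * Dg ≤ T x} := measure_mono hsubset
    _ < ENNReal.ofReal η := by
        rw [← ENNReal.ofReal_toReal hmeasfin]
        exact ENNReal.ofReal_lt_ofReal_iff hη |>.mpr hlt
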